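/- Let p be a prime, d ≥ 2, and let Q_p ∈ (ℤ/pℤ)[X₁,…,X_d] be a quadratic form. Suppose D_p ⊆ (ℤ/pℤ)^d is Q_p-generic over ℤ/pℤ. Let D ⊆ {1,2,…,p}^d ⊂ ℤ^d be the set of points whose coordinatewise reduction modulo p lies in D_p, and let Q ∈ ℤ[X₁,…,X_d] be a quadratic form whose coefficients have greatest common divisor 1 and whose reduction modulo p equals Q_p. Then |D| = |D_p| and D, viewed as a subset of ℝ^d, is Q-generic over ℝ (with Q regarded as a real quadratic form via its integer coefficients). -/

import Mathlib

open MvPolynomial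

/-- A subset `D ⊆ F^d` is `Q`-generic over `F` if every affine hyperplane of `F^d`
contains at most `d` points of `D`, and every `Q`-quadric contains at most `d+1`
points of `D`. -/
def QGeneric {F : Type*} [Field F] {d : ℕ} (Q : MvPolynomial (Fin d) F)
    (D : Set (Fin d → F)) : Prop :=
  (∀ f : MvPolynomial (Fin d) F, f.totalDegree = 1 →
    {x ∈ D | MvPolynomial.eval x f = 0}.encard ≤ (d : ℕ∞)) ∧
  (∀ f : MvPolynomial (Fin d) F, f.totalDegree ≤ 1 →
    {x ∈ D | MvPolynomial.eval x (Q + f) = 0}.encard ≤ (d : ℕ∞) + 1)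


def rmod (p : ℕ) {d : ℕ} (x : Fin d → ℤ) : Fin d → ZMod p := fun i => ((x i : ℤ) : ZMod p)

def toReal {d : ℕ} (x : Fin d → ℤ) : Fin d → ℝ := fun i => ((x i : ℤ) : ℝ)

@[simp] lemma rmod_apply (p : ℕ) {d : ℕ} (x : Fin d → ℤ) (i : Fin d) :
    rmod p x i = ((x i : ℤ) : ZMod p) := rfl

@[simp] lemma toReal_apply {d : ℕ} (x : Fin d → ℤ) (i : Fin d) :
    toReal x i = ((x i : ℤ) : ℝ) := rfl


lemma mono_of_degree_le_one {d : ℕ} {m : Fin d →₀ ℕ} (h : (m.sum fun _ e => e) ≤ 1) :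
    m = 0 ∨ ∃ i, m = Finsupp.single i 1 := by
  by_cases h0 : m = 0
  · exact Or.inl h0
  · right
    obtain ⟨i, hi⟩ : ∃ i, m i ≠ 0 := by
      by_contra hc; push_neg at hc
      exact h0 (Finsupp.ext fun a => hc a)
    have hsum : (m.sum fun _ e => e) = ∑ a ∈ m.support, m a := rfl
    rw [hsum] at h
    have hmem : i ∈ m.support := Finsupp.mem_support_iff.2 hi
    have h1 : m i ≤ ∑ a ∈ m.support, m a :=
      Finset.single_le_sum (fun a _ => Nat.zero_le _) hmem
    refine ⟨i, Finsupp.ext fun j => ?_⟩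
    rcases eq_or_ne j i with rfl | hij
    · simp only [Finsupp.single_eq_same]; omega
    · rw [Finsupp.single_eq_of_ne' (Ne.symm hij)]
      by_contra hj
      have hjmem : j ∈ m.support := Finsupp.mem_support_iff.2 hj
      have hsub : ({i, j} : Finset (Fin d)) ⊆ m.support := by
        intro a ha
        simp only [Finset.mem_insert, Finset.mem_singleton] at ha
        rcases ha with rfl | rfl <;> assumption
      have h2 := Finset.sum_le_sum_of_subset (f := m) hsub
      rw [Finset.sum_pair hij.symm] at h2
      omega

noncomputable def lin {d : ℕ} {R : Type*} [CommSemiring R] (w : R) (u : Fin d → R) :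
    MvPolynomial (Fin d) R :=
  C w + ∑ i, C (u i) * X i

lemma eval_lin {d : ℕ} {R : Type*} [CommSemiring R] (w : R) (u x : Fin d → R) :
    eval x (lin w u) = w + ∑ i, u i * x i := by
  simp [lin]

lemma coeff_lin_single {d : ℕ} {R : Type*} [CommSemiring R] (w : R) (u : Fin d → R)
    (i : Fin d) : (lin w u).coeff (Finsupp.single i 1) = u i := by
  classical
  simp only [lin, coeff_add, coeff_sum, coeff_C_mul, coeff_X', coeff_C]
  rw [if_neg (by simp [eq_comm, Finsupp.single_eq_zero]), Finset.sum_eq_single i]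
  · simp
  · intro b _ hb
    rw [if_neg (by simpa [Finsupp.single_left_inj] using hb), mul_zero]
  · simp

lemma totalDegree_lin_le {d : ℕ} {R : Type*} [CommSemiring R] [Nontrivial R] (w : R) (u : Fin d → R) :
    (lin w u).totalDegree ≤ 1 := by
  refine (totalDegree_add _ _).trans ?_
  refine max_le (by simp [totalDegree_C]) ?_
  refine (totalDegree_finset_sum _ _).trans ?_
  refine Finset.sup_le fun i _ => ?_
  refine (totalDegree_mul _ _).trans ?_
  simp [totalDegree_C, totalDegree_X]

lemma totalDegree_lin_eq {d : ℕ} {R : Type*} [CommSemiring R] [Nontrivial R] {w : R} {u : Fin d → R}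
    {i : Fin d} (hi : u i ≠ 0) : (lin w u).totalDegree = 1 := by
  refine le_antisymm (totalDegree_lin_le w u) ?_
  have hmem : Finsupp.single i 1 ∈ (lin w u).support := by
    rw [mem_support_iff, coeff_lin_single]; exact hi
  have := le_totalDegree hmem
  simpa [Finsupp.sum_single_index] using this

lemma eq_lin_of_totalDegree_le_one {d : ℕ} {R : Type*} [CommSemiring R]
    {f : MvPolynomial (Fin d) R} (hf : f.totalDegree ≤ 1) :
    f = lin (f.coeff 0) (fun i => f.coeff (Finsupp.single i 1)) := by
  classical
  ext m
  by_cases hm0 : m = 0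
  · subst hm0
    simp only [lin, coeff_add, coeff_sum, coeff_C_mul, coeff_X', coeff_zero_C]
    rw [Finset.sum_eq_zero, add_zero]
    intro b _
    rw [if_neg (by simp [Finsupp.single_eq_zero]), mul_zero]
  · by_cases hms : ∃ i, m = Finsupp.single i 1
    · obtain ⟨i, rfl⟩ := hms
      rw [coeff_lin_single]
    · have hL : f.coeff m = 0 := by
        by_contra hne
        have hmem : m ∈ f.support := mem_support_iff.2 hne
        have hdeg := le_totalDegree hmem
        have := mono_of_degree_le_one (hdeg.trans hf)
        rcases this with h | ⟨i, hi⟩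
        · exact hm0 h
        · exact hms ⟨i, hi⟩
      rw [hL]
      symm
      simp only [lin, coeff_add, coeff_sum, coeff_C_mul, coeff_X', coeff_C]
      rw [if_neg (Ne.symm hm0), Finset.sum_eq_zero, add_zero]
      intro b _
      rw [if_neg (fun h => hms ⟨b, h.symm⟩), mul_zero]

lemma eval_of_totalDegree_le_one {d : ℕ} {R : Type*} [CommSemiring R]
    {f : MvPolynomial (Fin d) R} (hf : f.totalDegree ≤ 1) (x : Fin d → R) :
    eval x f = f.coeff 0 + ∑ i, f.coeff (Finsupp.single i 1) * x i := by
  conv_lhs => rw [eq_lin_of_totalDegree_le_one hf]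
  exact eval_lin _ _ _

lemma exists_coeff_single_ne_zero {d : ℕ} {R : Type*} [CommSemiring R]
    {f : MvPolynomial (Fin d) R} (hf : f.totalDegree = 1) :
    ∃ i, f.coeff (Finsupp.single i 1) ≠ 0 := by
  have hne : f ≠ 0 := by
    intro h; rw [h] at hf; simp at hf
  have hsupp : f.support.Nonempty := support_nonempty.2 hne
  obtain ⟨m, hm, hms⟩ :=
    Finset.exists_mem_eq_sup f.support hsupp (fun m : Fin d →₀ ℕ => m.sum fun _ e => e)
  have hdeg : (m.sum fun _ e => e) = 1 := by
    rw [← hms]; exact hf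
  rcases mono_of_degree_le_one hdeg.le with h0 | ⟨i, hi⟩
  · rw [h0] at hdeg; simp [Finsupp.sum_zero_index] at hdeg
  · exact ⟨i, by rw [← hi]; exact mem_support_iff.1 hm⟩

lemma evalCast {d : ℕ} {R : Type*} [CommSemiring R] (φ : ℤ →+* R)
    (Q : MvPolynomial (Fin d) ℤ) (x : Fin d → ℤ) :
    eval (fun i => φ (x i)) (MvPolynomial.map φ Q) = φ (eval x Q) := by
  rw [← eval₂_id (g := x) Q, eval₂_comp_left φ (RingHom.id ℤ) x Q, RingHom.comp_id,
    eval₂_eq_eval_map]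
  rfl


lemma key_primitive {ι : Type} [Fintype ι] [DecidableEq ι] (S : Set (ι → ℤ)) (α : ι → ℝ)
    (hα : α ≠ 0) (h : ∀ v ∈ S, ∑ i, α i * (v i : ℝ) = 0) :
    ∃ c : ι → ℤ, (∀ z : ℤ, (∀ i, z ∣ c i) → IsUnit z) ∧ ∀ v ∈ S, ∑ i, c i * v i = 0 := by
  classical
  set Sq : Set (ι → ℚ) := (fun v : ι → ℤ => fun i => ((v i : ℚ))) '' S with hSq
  set W : Submodule ℚ (ι → ℚ) := Submodule.span ℚ Sq with hW
  have hWlt : W < ⊤ := by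
    rw [lt_top_iff_ne_top]
    intro htop
    let A : (ι → ℝ) →ₗ[ℝ] ℝ := ∑ i, α i • LinearMap.proj i
    let Lc : (ι → ℚ) →ₗ[ℚ] (ι → ℝ) :=
      LinearMap.pi fun i => (Algebra.linearMap ℚ ℝ).comp (LinearMap.proj i)
    let A' : (ι → ℚ) →ₗ[ℚ] ℝ := (A.restrictScalars ℚ).comp Lc
    have hA' : ∀ q : ι → ℚ, A' q = ∑ i, α i * ((q i : ℚ) : ℝ) := by
      intro q
      simp [A', A, Lc, LinearMap.sum_apply, smul_eq_mul]
    have hker : W ≤ LinearMap.ker A' := by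
      rw [hW, Submodule.span_le]
      rintro _ ⟨v, hv, rfl⟩
      simp only [SetLike.mem_coe, LinearMap.mem_ker]
      rw [hA']
      rw [← h v hv]
      norm_num
    rw [htop, top_le_iff] at hker
    have hzero : A' = 0 := LinearMap.ker_eq_top.1 hker
    apply hα
    funext j
    have hj := hA' (Pi.single j 1)
    rw [hzero] at hj
    simp only [LinearMap.zero_apply] at hj
    have heq : ∑ i, α i * (Rat.cast ((Pi.single j 1 : ι → ℚ) i) : ℝ) = α j := by
      rw [Finset.sum_eq_single j]
      · simp
      · intro b _ hb; rw [Pi.single_eq_of_ne hb]; simp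
      · simp
    rw [heq] at hj
    simpa using hj.symm
  obtain ⟨φ, hφ0, hφmap⟩ := Submodule.exists_dual_map_eq_bot_of_lt_top hWlt inferInstance
  have hφW : ∀ x ∈ W, φ x = 0 := by
    intro x hx
    have hmem : φ x ∈ W.map φ := Submodule.mem_map_of_mem hx
    rwa [hφmap, Submodule.mem_bot] at hmem
  set q : ι → ℚ := fun i => φ (Pi.single i 1) with hq
  have hφeq : ∀ z : ι → ℚ, φ z = ∑ i, q i * z i := by
    intro z
    conv_lhs => rw [pi_eq_sum_univ z]
    rw [map_sum]
    refine Finset.sum_congr rfl fun i _ => ?_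
    rw [map_smul, smul_eq_mul, mul_comm]
    have hps : (fun j => if i = j then (1:ℚ) else 0) = Pi.single i 1 := by
      funext j; simp [Pi.single_apply, eq_comm]
    rw [hps]
  have hqne : q ≠ 0 := by
    intro h0
    apply hφ0
    refine LinearMap.ext fun z => ?_
    rw [hφeq z, h0]
    simp
  obtain ⟨m, hm⟩ := IsLocalization.exist_integer_multiples_of_finite (nonZeroDivisors ℤ) q
  have hm' : ∀ i, ∃ z : ℤ, (z : ℚ) = (m : ℤ) • q i := by
    intro i
    obtain ⟨z, hz⟩ := hm i
    exact ⟨z, by simpa using hz⟩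
  choose c' hc' using hm'
  have hmne : ((m : ℤ) : ℚ) ≠ 0 := by
    exact_mod_cast nonZeroDivisors.coe_ne_zero m
  have hc'ne : ∃ i, c' i ≠ 0 := by
    by_contra hall
    push_neg at hall
    apply hqne
    funext i
    have := hc' i
    rw [hall i] at this
    simp only [Int.cast_zero] at this
    have := this.symm
    rw [zsmul_eq_mul] at this
    rcases mul_eq_zero.1 this with h | h
    · exact absurd h hmne
    · exact h
  set g : ℤ := Finset.gcd Finset.univ c' with hg
  have hgne : g ≠ 0 := by
    rw [hg, Ne, Finset.gcd_eq_zero_iff]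
    push_neg
    obtain ⟨i, hi⟩ := hc'ne
    exact ⟨i, Finset.mem_univ i, hi⟩
  have hdvd : ∀ i, g ∣ c' i := fun i => Finset.gcd_dvd (Finset.mem_univ i)
  set c : ι → ℤ := fun i => c' i / g with hc
  have hfac : ∀ i, c' i = g * c i := fun i => (Int.mul_ediv_cancel' (hdvd i)).symm
  refine ⟨c, ?_, ?_⟩
  · intro z hz
    have hzg : ∀ i, z * g ∣ c' i := by
      intro i
      obtain ⟨k, hk⟩ := hz i
      exact ⟨k, by rw [hfac i, hk]; ring⟩
    have : z * g ∣ g := hg ▸ Finset.dvd_gcd fun i _ => hzg i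
    obtain ⟨k, hk⟩ := this
    have h1 : g * 1 = g * (z * k) := by linear_combination hk
    have h2 : (1 : ℤ) = z * k := mul_left_cancel₀ hgne h1
    exact IsUnit.of_mul_eq_one (a := z) k h2.symm
  · intro v hv
    have h1 : ∑ i, q i * (v i : ℚ) = 0 := by
      have hmem : (fun i => ((v i : ℚ))) ∈ W := Submodule.subset_span ⟨v, hv, rfl⟩
      have := hφW _ hmem
      rwa [hφeq] at this
    have h2 : ∑ i, (c' i : ℚ) * (v i : ℚ) = 0 := by
      calc ∑ i, (c' i : ℚ) * (v i : ℚ)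
          = ∑ i, ((m : ℤ) : ℚ) * (q i * (v i : ℚ)) := by
            refine Finset.sum_congr rfl fun i _ => ?_
            rw [hc' i, zsmul_eq_mul]; ring
        _ = ((m : ℤ) : ℚ) * ∑ i, q i * (v i : ℚ) := by rw [Finset.mul_sum]
        _ = 0 := by rw [h1, mul_zero]
    have h3 : ∑ i, c' i * v i = 0 := by
      have : ((∑ i, c' i * v i : ℤ) : ℚ) = 0 := by push_cast; exact h2
      exact_mod_cast this
    have h4 : g * ∑ i, c i * v i = 0 := by
      rw [Finset.mul_sum]
      rw [← h3]
      refine Finset.sum_congr rfl fun i _ => ?_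
      rw [hfac i]; ring
    exact (mul_eq_zero.1 h4).resolve_left hgne


theorem stmt_15' (p : ℕ) [hp : Fact p.Prime] (d : ℕ) (hd : 2 ≤ d)
    (Qp : MvPolynomial (Fin d) (ZMod p)) (hQp0 : Qp ≠ 0) (hQp : Qp.IsHomogeneous 2)
    (Dp : Set (Fin d → ZMod p))
    (hDp : (∀ f : MvPolynomial (Fin d) (ZMod p), f.totalDegree = 1 →
        {x ∈ Dp | MvPolynomial.eval x f = 0}.encard ≤ (d : ℕ∞)) ∧
      (∀ f : MvPolynomial (Fin d) (ZMod p), f.totalDegree ≤ 1 →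
        {x ∈ Dp | MvPolynomial.eval x (Qp + f) = 0}.encard ≤ (d : ℕ∞) + 1))
    (Q : MvPolynomial (Fin d) ℤ) (hQh : Q.IsHomogeneous 2)
    (hprim : ∀ c : ℤ, (∀ m, c ∣ Q.coeff m) → IsUnit c)
    (hred : MvPolynomial.map (Int.castRingHom (ZMod p)) Q = Qp)
    (D : Set (Fin d → ℤ))
    (hD : D = {x : Fin d → ℤ |
      (∀ i, 1 ≤ x i ∧ x i ≤ (p : ℤ)) ∧ (fun i => ((x i : ℤ) : ZMod p)) ∈ Dp}) :
    D.ncard = Dp.ncard ∧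
    ((∀ f : MvPolynomial (Fin d) ℝ, f.totalDegree = 1 →
        {x ∈ toReal '' D | MvPolynomial.eval x f = 0}.encard ≤ (d : ℕ∞)) ∧
      (∀ f : MvPolynomial (Fin d) ℝ, f.totalDegree ≤ 1 →
        {x ∈ toReal '' D | MvPolynomial.eval x
          (MvPolynomial.map (Int.castRingHom ℝ) Q + f) = 0}.encard ≤ (d : ℕ∞) + 1)) := by
  classical
  haveI : NeZero p := ⟨hp.out.ne_zero⟩
  have hp1 : 1 < (p : ℤ) := by exact_mod_cast hp.out.one_lt
  have hDsub : ∀ x ∈ D, (∀ i, 1 ≤ x i ∧ x i ≤ (p : ℤ)) := by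
    intro x hx; rw [hD] at hx; exact hx.1
  have hDmem : ∀ x ∈ D, rmod p x ∈ Dp := by
    intro x hx; rw [hD] at hx; exact hx.2
  have hrinj : Set.InjOn (rmod p) D := by
    intro x hx y hy hxy
    funext i
    have h1 := hDsub x hx i
    have h2 := hDsub y hy i
    have h3 : ((x i : ZMod p)) = ((y i : ZMod p)) := congrFun hxy i
    rw [ZMod.intCast_eq_intCast_iff] at h3
    obtain ⟨k, hk⟩ := Int.ModEq.dvd h3
    rcases lt_trichotomy k 0 with hkk | hkk | hkk
    · have hk1 : k ≤ -1 := by omega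
      nlinarith
    · rw [hkk, mul_zero] at hk; linarith
    · have hk1 : 1 ≤ k := by omega
      nlinarith
  have himage : rmod p '' D = Dp := by
    apply Set.Subset.antisymm
    · rintro _ ⟨x, hx, rfl⟩; exact hDmem x hx
    · intro y hy
      set x : Fin d → ℤ := fun i => if y i = 0 then (p : ℤ) else ((y i).val : ℤ) with hx
      have hrx : rmod p x = y := by
        funext i
        show ((x i : ℤ) : ZMod p) = y i
        by_cases h0 : y i = 0
        · simp only [hx, if_pos h0]
          rw [h0]
          exact_mod_cast ZMod.natCast_self p
        · simp only [hx, if_neg h0]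
          rw [Int.cast_natCast]
          exact ZMod.natCast_rightInverse (y i)
      have hbound : ∀ i, 1 ≤ x i ∧ x i ≤ (p : ℤ) := by
        intro i
        by_cases h0 : y i = 0
        · simp only [hx, if_pos h0]
          constructor <;> linarith
        · simp only [hx, if_neg h0]
          constructor
          · have hne : (y i).val ≠ 0 := fun hv => h0 ((ZMod.val_eq_zero _).1 hv)
            exact_mod_cast Nat.one_le_iff_ne_zero.2 hne
          · exact_mod_cast (ZMod.val_lt (y i)).le
      refine ⟨x, ?_, hrx⟩
      rw [hD]
      exact ⟨hbound, by
        have : (fun i => ((x i : ℤ) : ZMod p)) = rmod p x := rfl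
        rw [this, hrx]; exact hy⟩
  have hcard : D.ncard = Dp.ncard := by
    rw [← himage]
    exact (Set.ncard_image_of_injOn hrinj).symm
  have hFinj : Function.Injective (toReal (d := d)) := by
    intro x y hxy
    funext i
    have h := congrFun hxy i
    rw [toReal_apply, toReal_apply] at h
    exact_mod_cast h
  have hcount : ∀ T : Set (Fin d → ℤ), T ⊆ D → ∀ E : Set (Fin d → ZMod p),
      (∀ x ∈ T, rmod p x ∈ E) → T.encard ≤ E.encard := by
    intro T hTD E hTE
    calc T.encard = (rmod p '' T).encard := (Set.InjOn.encard_image (hrinj.mono hTD)).symm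
      _ ≤ E.encard := Set.encard_mono (by rintro _ ⟨x, hx, rfl⟩; exact hTE x hx)
  have himg : ∀ g : MvPolynomial (Fin d) ℝ,
      {x ∈ toReal '' D | eval x g = 0} = toReal '' {x ∈ D | eval (toReal x) g = 0} := by
    intro g
    ext y
    constructor
    · rintro ⟨⟨z, hz, rfl⟩, hy⟩
      exact ⟨z, ⟨hz, hy⟩, rfl⟩
    · rintro ⟨z, ⟨hz, hev⟩, rfl⟩
      exact ⟨⟨z, hz, rfl⟩, hev⟩
  have evalQZ : ∀ x : Fin d → ℤ,
      eval (rmod p x) Qp = ((eval x Q : ℤ) : ZMod p) := by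
    intro x
    rw [← hred]
    exact evalCast (Int.castRingHom (ZMod p)) Q x
  have evalQR : ∀ x : Fin d → ℤ,
      eval (toReal x) (MvPolynomial.map (Int.castRingHom ℝ) Q) = ((eval x Q : ℤ) : ℝ) := by
    intro x
    exact evalCast (Int.castRingHom ℝ) Q x
  refine ⟨hcard, fun f hf => ?_, fun f hf => ?_⟩
  -- Part A : hyperplanes
  · rw [himg f, Set.InjOn.encard_image (hFinj.injOn)]
    set T : Set (Fin d → ℤ) := {x ∈ D | eval (toReal x) f = 0} with hT
    have hTD : T ⊆ D := fun x hx => hx.1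
    rcases Set.eq_empty_or_nonempty T with hTe | ⟨x₀, hx₀⟩
    · rw [hTe]; simp
    obtain ⟨i₀, hi₀⟩ := exists_coeff_single_ne_zero hf
    have hα : (fun o : Option (Fin d) =>
        o.elim (f.coeff 0) fun i => f.coeff (Finsupp.single i 1)) ≠ 0 := by
      intro h0
      exact hi₀ (by simpa using congrFun h0 (some i₀))
    have hkill : ∀ v ∈ ((fun (x : Fin d → ℤ) (o : Option (Fin d)) => o.elim 1 x) '' T),
        ∑ o, (fun o : Option (Fin d) =>
          o.elim (f.coeff 0) fun i => f.coeff (Finsupp.single i 1)) o * (v o : ℝ) = 0 := by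
      rintro _ ⟨x, hx, rfl⟩
      rw [Fintype.sum_option]
      have hev := hx.2
      rw [eval_of_totalDegree_le_one hf.le] at hev
      simpa using hev
    obtain ⟨c, hcprim, hcrel⟩ := key_primitive _ _ hα hkill
    set a : Fin d → ℤ := fun i => c (some i) with ha
    have hrel : ∀ x ∈ T, c none + ∑ i, a i * x i = 0 := by
      intro x hx
      have h1 := hcrel _ ⟨x, hx, rfl⟩
      rw [Fintype.sum_option] at h1
      simpa using h1
    have hex : ∃ i, ((a i : ZMod p)) ≠ 0 := by
      by_contra hall
      push_neg at hall
      have hdvd : ∀ o : Option (Fin d), (p : ℤ) ∣ c o := by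
        intro o
        cases o with
        | none =>
          have h0 := hrel x₀ hx₀
          have h1 : ((c none + ∑ i, a i * x₀ i : ℤ) : ZMod p) = 0 := by rw [h0]; simp
          push_cast at h1
          have h2 : ((c none : ℤ) : ZMod p) = 0 := by
            rw [Finset.sum_eq_zero (fun i _ => by rw [hall i, zero_mul])] at h1
            simpa using h1
          exact (ZMod.intCast_zmod_eq_zero_iff_dvd _ p).1 h2
        | some i => exact (ZMod.intCast_zmod_eq_zero_iff_dvd _ p).1 (hall i)
      exact (Nat.prime_iff_prime_int.1 hp.out).not_unit (hcprim _ hdvd)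
    obtain ⟨i₁, hi₁⟩ := hex
    have hg : (lin ((c none : ZMod p)) fun i => (a i : ZMod p)).totalDegree = 1 :=
      totalDegree_lin_eq hi₁
    refine le_trans (hcount T hTD
      {y ∈ Dp | eval y (lin ((c none : ZMod p)) fun i => (a i : ZMod p)) = 0} ?_)
      (hDp.1 _ hg)
    intro x hx
    refine ⟨hDmem x (hTD hx), ?_⟩
    rw [eval_lin]
    have h0 := hrel x hx
    have h1 : ((c none + ∑ i, a i * x i : ℤ) : ZMod p) = 0 := by rw [h0]; simp
    push_cast at h1
    simpa using h1
  -- Part B : quadrics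
  · rw [himg _, Set.InjOn.encard_image (hFinj.injOn)]
    set T : Set (Fin d → ℤ) :=
      {x ∈ D | eval (toReal x) (MvPolynomial.map (Int.castRingHom ℝ) Q + f) = 0} with hT
    have hTD : T ⊆ D := fun x hx => hx.1
    rcases Set.eq_empty_or_nonempty T with hTe | ⟨x₀, hx₀⟩
    · rw [hTe]; simp
    have hα : (fun o : Option (Option (Fin d)) =>
        o.elim 1 fun o' => o'.elim (f.coeff 0) fun i => f.coeff (Finsupp.single i 1))
        ≠ (0 : Option (Option (Fin d)) → ℝ) := by
      intro h0
      have := congrFun h0 none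
      simp at this
    have hkill : ∀ v ∈ ((fun (x : Fin d → ℤ) (o : Option (Option (Fin d))) =>
          o.elim (eval x Q) fun o' => o'.elim 1 x) '' T),
        ∑ o, (fun o : Option (Option (Fin d)) =>
          o.elim 1 fun o' => o'.elim (f.coeff 0) fun i => f.coeff (Finsupp.single i 1)) o
          * (v o : ℝ) = 0 := by
      rintro _ ⟨x, hx, rfl⟩
      rw [Fintype.sum_option, Fintype.sum_option]
      have hev := hx.2
      rw [(eval (toReal x)).map_add, evalQR x, eval_of_totalDegree_le_one hf] at hev
      simpa using hev
    obtain ⟨c, hcprim, hcrel⟩ := key_primitive _ _ hα hkill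
    set t : ℤ := c none with htdef
    set w : ℤ := c (some none) with hwdef
    set u : Fin d → ℤ := fun i => c (some (some i)) with hudef
    have hrel : ∀ x ∈ T, t * eval x Q + (w + ∑ i, u i * x i) = 0 := by
      intro x hx
      have h1 := hcrel _ ⟨x, hx, rfl⟩
      rw [Fintype.sum_option, Fintype.sum_option] at h1
      simpa using h1
    by_cases ht : ((t : ZMod p)) = 0
    · by_cases hu : ∀ i, ((u i : ZMod p)) = 0
      · exfalso
        have h0 := hrel x₀ hx₀
        have h1 : ((t * eval x₀ Q + (w + ∑ i, u i * x₀ i) : ℤ) : ZMod p) = 0 := by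
          rw [h0]; simp
        push_cast at h1
        rw [ht, zero_mul, zero_add,
          Finset.sum_eq_zero (fun i _ => by rw [hu i, zero_mul]), add_zero] at h1
        have hdvd : ∀ o : Option (Option (Fin d)), (p : ℤ) ∣ c o := by
          intro o
          rcases o with _ | o'
          · exact (ZMod.intCast_zmod_eq_zero_iff_dvd _ p).1 ht
          rcases o' with _ | i
          · exact (ZMod.intCast_zmod_eq_zero_iff_dvd _ p).1 h1
          · exact (ZMod.intCast_zmod_eq_zero_iff_dvd _ p).1 (hu i)
        exact (Nat.prime_iff_prime_int.1 hp.out).not_unit (hcprim _ hdvd)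
      · push_neg at hu
        obtain ⟨i₁, hi₁⟩ := hu
        have hg : (lin ((w : ZMod p)) fun i => (u i : ZMod p)).totalDegree = 1 :=
          totalDegree_lin_eq hi₁
        refine le_trans (le_trans (hcount T hTD
          {y ∈ Dp | eval y (lin ((w : ZMod p)) fun i => (u i : ZMod p)) = 0} ?_)
          (hDp.1 _ hg)) le_self_add
        intro x hx
        refine ⟨hDmem x (hTD hx), ?_⟩
        rw [eval_lin]
        have h0 := hrel x hx
        have h1 : ((t * eval x Q + (w + ∑ i, u i * x i) : ℤ) : ZMod p) = 0 := by
          rw [h0]; simp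
        push_cast at h1
        rw [ht, zero_mul, zero_add] at h1
        simpa using h1
    · have hg : (C ((t : ZMod p))⁻¹ *
          lin ((w : ZMod p)) fun i => (u i : ZMod p)).totalDegree ≤ 1 := by
        refine (totalDegree_mul _ _).trans ?_
        simpa [totalDegree_C] using totalDegree_lin_le ((w : ZMod p)) fun i => (u i : ZMod p)
      refine le_trans (hcount T hTD
        {y ∈ Dp | eval y (Qp + C ((t : ZMod p))⁻¹ *
          lin ((w : ZMod p)) fun i => (u i : ZMod p)) = 0} ?_) (hDp.2 _ hg)
      intro x hx
      refine ⟨hDmem x (hTD hx), ?_⟩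
      rw [(eval (rmod p x)).map_add, (eval (rmod p x)).map_mul, eval_C, eval_lin, evalQZ x]
      have h0 := hrel x hx
      have h1 : ((t * eval x Q + (w + ∑ i, u i * x i) : ℤ) : ZMod p) = 0 := by
        rw [h0]; simp
      push_cast at h1
      have h2 : ((w : ZMod p) + ∑ i, ((u i : ZMod p)) * ((x i : ZMod p)))
          = -(((t : ZMod p)) * ((eval x Q : ℤ) : ZMod p)) := by
        linear_combination h1
      have h3 : ((w : ZMod p) + ∑ i, ((u i : ZMod p)) * (rmod p x i))
          = -(((t : ZMod p)) * ((eval x Q : ℤ) : ZMod p)) := by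
        simpa using h2
      rw [h3, mul_neg, ← mul_assoc, inv_mul_cancel₀ ht, one_mul]
      ring

/-- Let `p` be a prime, `d ≥ 2`, and `Q_p ∈ (ℤ/pℤ)[X₁,…,X_d]` a quadratic
form. Suppose `D_p ⊆ (ℤ/pℤ)^d` is `Q_p`-generic. Let `D ⊆ {1,…,p}^d ⊂ ℤ^d` consist of
the points whose coordinatewise reduction mod `p` lies in `D_p`, and `Q ∈ ℤ[X₁,…,X_d]`
a quadratic form with coprime coefficients reducing to `Q_p` mod `p`. Then `|D| = |D_p|`
and `D`, viewed in `ℝ^d`, is `Q`-generic over `ℝ`. -/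
theorem stmt_15 (p : ℕ) [hp : Fact p.Prime] (d : ℕ) (hd : 2 ≤ d)
    (Qp : MvPolynomial (Fin d) (ZMod p)) (hQp0 : Qp ≠ 0) (hQp : Qp.IsHomogeneous 2)
    (Dp : Set (Fin d → ZMod p)) (hDp : QGeneric Qp Dp)
    (Q : MvPolynomial (Fin d) ℤ) (hQh : Q.IsHomogeneous 2)
    (hprim : ∀ c : ℤ, (∀ m, c ∣ Q.coeff m) → IsUnit c)
    (hred : MvPolynomial.map (Int.castRingHom (ZMod p)) Q = Qp)
    (D : Set (Fin d → ℤ))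
    (hD : D = {x : Fin d → ℤ |
      (∀ i, 1 ≤ x i ∧ x i ≤ (p : ℤ)) ∧ (fun i => ((x i : ℤ) : ZMod p)) ∈ Dp}) :
    D.ncard = Dp.ncard ∧
    QGeneric (MvPolynomial.map (Int.castRingHom ℝ) Q)
      ((fun x : Fin d → ℤ => fun i : Fin d => ((x i : ℤ) : ℝ)) '' D) := by
  exact stmt_15' p d hd Qp hQp0 hQp Dp hDp Q hQh hprim hred D hD
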